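/- Let F be a finite nonempty set of primes. Then the subgroup of the topological group (∏_{p∈F} ℤ_p)ˣ generated by the set of units arising from primes q ∉ F (each such prime q being a unit in every ℤ_p with p ∈ F) is dense in (∏_{p∈F} ℤ_p)ˣ. -/

import Mathlib

/-- For a finite nonempty set `F` of primes, the subgroup of `(∏_{p ∈ F} ℤ_p)ˣ` generated by
the units coming from primes `q ∉ F` is dense. -/
theorem dense_closure_units_of_primes_not_mem
    (F : Finset ℕ) (hF : ∀ p : F, Fact (Nat.Prime (p : ℕ))) (hne : F.Nonempty) :
    Dense ((Subgroup.closure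
        {u : (∀ p : F, PadicInt (p : ℕ))ˣ |
          ∃ q : ℕ, q.Prime ∧ q ∉ F ∧
            (u : ∀ p : F, PadicInt (p : ℕ)) = fun (p : F) => (q : PadicInt (p : ℕ))}
        : Subgroup (∀ p : F, PadicInt (p : ℕ))ˣ) : Set (∀ p : F, PadicInt (p : ℕ))ˣ) := by
  haveI : ∀ p : F, Fact (Nat.Prime (p : ℕ)) := hF
  set M := ∀ p : F, PadicInt (p : ℕ) with hM
  intro u
  -- coordinates of `u` are units
  have hu_unit : ∀ p : F, IsUnit ((u : M) p) := by
    intro p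
    refine IsUnit.of_mul_eq_one ((↑u⁻¹ : M) p) ?_
    have := congrFun (Units.mul_inv u) p
    simpa using this
  -- key approximation
  have key : ∀ n : ℕ, ∃ v : Mˣ,
      (∃ q : ℕ, q.Prime ∧ q ∉ F ∧ (v : M) = fun p : F => (q : PadicInt (p : ℕ))) ∧
      ∀ p : F, ‖(v : M) p - (u : M) p‖ ≤ ((p : ℕ) : ℝ) ^ (-((n + 1 : ℕ) : ℤ)) := by
    intro n
    set a : F → ℕ := fun p => (p : ℕ) ^ (n + 1) with ha
    have hcop : Pairwise (Function.onFun Nat.Coprime a) := by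
      intro i j hij
      exact Nat.Coprime.pow _ _
        ((Nat.coprime_primes (hF i).out (hF j).out).mpr (fun h => hij (Subtype.ext h)))
    have hNpos : 0 < ∏ i : F, a i :=
      Finset.prod_pos fun i _ => pow_pos (hF i).out.pos _
    haveI : NeZero (∏ i : F, a i) := ⟨hNpos.ne'⟩
    set e := ZMod.prodEquivPi a hcop with he
    set b : ∀ i : F, ZMod (a i) := fun p => PadicInt.toZModPow (n + 1) ((u : M) p) with hb
    have hbu : IsUnit b := by
      refine IsUnit.of_mul_eq_one (fun p => PadicInt.toZModPow (n + 1) ((↑u⁻¹ : M) p)) ?_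
      funext p
      have h1 : ((u : M) p) * ((↑u⁻¹ : M) p) = 1 := by
        have := congrFun (Units.mul_inv u) p
        simpa using this
      simp only [hb, Pi.mul_apply, ← map_mul, h1, map_one, Pi.one_apply]
    have haU : IsUnit (e.symm b) := hbu.map (e.symm : (∀ i : F, ZMod (a i)) →+* ZMod (∏ i : F, a i))
    obtain ⟨q, hq_gt, hq_prime, hq_mod⟩ :=
      Nat.forall_exists_prime_gt_and_eq_mod haU (F.max' hne)
    have hqF : q ∉ F := fun hq => absurd (F.le_max' q hq) (not_le.mpr hq_gt)
    -- congruences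
    have hcong : ∀ p : F, (q : ZMod (a p)) = b p := by
      intro p
      have h1 : e ((q : ZMod (∏ i : F, a i))) = b := by
        rw [hq_mod, RingEquiv.apply_symm_apply]
      have h2 : e ((q : ZMod (∏ i : F, a i))) = fun i : F => (q : ZMod (a i)) := by
        rw [map_natCast]
        rfl
      rw [h2] at h1
      exact congrFun h1 p
    have hbound : ∀ p : F, ‖(q : PadicInt (p : ℕ)) - (u : M) p‖ ≤ ((p : ℕ) : ℝ) ^ (-((n + 1 : ℕ) : ℤ)) := by
      intro p
      rw [PadicInt.norm_le_pow_iff_mem_span_pow, ← PadicInt.ker_toZModPow, RingHom.mem_ker,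
        map_sub]
      have : (PadicInt.toZModPow (n + 1) ((q : ℕ) : PadicInt (p : ℕ))) = (q : ZMod ((p : ℕ) ^ (n + 1))) :=
        map_natCast _ q
      rw [this, sub_eq_zero]
      exact hcong p
    -- each coordinate is a unit
    have hlt1 : ∀ p : F, ((p : ℕ) : ℝ) ^ (-((n + 1 : ℕ) : ℤ)) < 1 := by
      intro p
      have hp1 : (1 : ℝ) < ((p : ℕ) : ℝ) := by exact_mod_cast (hF p).out.one_lt
      rw [zpow_neg, zpow_natCast]
      have : (1 : ℝ) < ((p : ℕ) : ℝ) ^ (n + 1) := one_lt_pow₀ hp1 (Nat.succ_ne_zero n)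
      exact inv_lt_one_of_one_lt₀ this
    have hunit : ∀ p : F, IsUnit ((q : ℕ) : PadicInt (p : ℕ)) := by
      intro p
      rw [PadicInt.isUnit_iff]
      by_contra h
      have hlt : ‖((q : ℕ) : PadicInt (p : ℕ))‖ < 1 :=
        lt_of_le_of_ne (PadicInt.norm_le_one _) h
      have hu1 : ‖(u : M) p‖ = 1 := PadicInt.isUnit_iff.mp (hu_unit p)
      have hmax : ‖(u : M) p‖ ≤ max ‖((q : ℕ) : PadicInt (p : ℕ))‖ ‖(u : M) p - (q : ℕ)‖ := by
        calc ‖(u : M) p‖ = ‖((q : ℕ) : PadicInt (p : ℕ)) + ((u : M) p - (q : ℕ))‖ := by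
              ring_nf
          _ ≤ _ := PadicInt.nonarchimedean _ _
      have h2 : ‖(u : M) p - ((q : ℕ) : PadicInt (p : ℕ))‖ < 1 := by
        rw [norm_sub_rev]
        exact lt_of_le_of_lt (hbound p) (hlt1 p)
      rw [hu1] at hmax
      have := max_lt hlt h2
      exact absurd (lt_of_le_of_lt hmax this) (lt_irrefl 1)
    have hMu : IsUnit ((fun p => ((q : ℕ) : PadicInt (p : ℕ))) : M) := by
      refine IsUnit.of_mul_eq_one (fun p => (((hunit p).unit⁻¹ : (PadicInt (p : ℕ))ˣ) : PadicInt (p : ℕ))) ?_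
      funext p
      show ((q : ℕ) : PadicInt (p : ℕ)) * _ = 1
      rw [← (hunit p).unit_spec, Units.mul_inv]
    refine ⟨hMu.unit, ⟨q, hq_prime, hqF, hMu.unit_spec⟩, ?_⟩
    intro p
    have : (hMu.unit : M) p = ((q : ℕ) : PadicInt (p : ℕ)) := by rw [hMu.unit_spec]
    rw [this]
    exact hbound p
  choose v hv hbd using key
  -- limit of powers
  have hlim : ∀ p : F, Filter.Tendsto (fun n : ℕ => ((p : ℕ) : ℝ) ^ (-((n + 1 : ℕ) : ℤ)))
      Filter.atTop (nhds 0) := by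
    intro p
    have hp1 : (1 : ℝ) < ((p : ℕ) : ℝ) := by exact_mod_cast (hF p).out.one_lt
    have h0 : (0 : ℝ) ≤ ((p : ℕ) : ℝ)⁻¹ := by positivity
    have hr : ((p : ℕ) : ℝ)⁻¹ < 1 := inv_lt_one_of_one_lt₀ hp1
    have := (tendsto_pow_atTop_nhds_zero_of_lt_one h0 hr).comp
      (Filter.tendsto_add_atTop_nat 1)
    convert this using 2 with n
    simp only [Function.comp_apply]
    rw [zpow_neg, zpow_natCast, inv_pow]
  -- tendsto of values
  have h1 : Filter.Tendsto (fun n => ((v n : M))) Filter.atTop (nhds (u : M)) := by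
    rw [tendsto_pi_nhds]
    intro p
    rw [tendsto_iff_norm_sub_tendsto_zero]
    exact squeeze_zero (fun n => norm_nonneg _) (fun n => hbd n p) (hlim p)
  -- tendsto of inverses
  have h2 : Filter.Tendsto (fun n => ((↑(v n)⁻¹ : M))) Filter.atTop (nhds (↑u⁻¹ : M)) := by
    rw [tendsto_pi_nhds]
    intro p
    rw [tendsto_iff_norm_sub_tendsto_zero]
    refine squeeze_zero (fun n => norm_nonneg _) (fun n => ?_) (hlim p)
    set A := (↑(v n)⁻¹ : M) p with hA
    set B := (↑u⁻¹ : M) p with hB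
    set x := (v n : M) p with hx
    set y := (u : M) p with hy
    have hAx : A * x = 1 := congrFun (Units.inv_mul (v n)) p
    have hyB : y * B = 1 := congrFun (Units.mul_inv u) p
    have heq : A - B = A * ((y - x) * B) := by
      have h3 : A * (y * B) = A := by rw [hyB, mul_one]
      have h4 : A * (x * B) = B := by
        rw [← mul_assoc, hAx, one_mul]
      calc A - B = A * (y * B) - A * (x * B) := by rw [h3, h4]
        _ = A * ((y - x) * B) := by ring
    calc ‖A - B‖ = ‖A * ((y - x) * B)‖ := by rw [heq]
      _ ≤ ‖A‖ * ‖(y - x) * B‖ := norm_mul_le _ _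
      _ ≤ ‖(y - x) * B‖ :=
          mul_le_of_le_one_left (norm_nonneg _) (PadicInt.norm_le_one _)
      _ ≤ ‖y - x‖ * ‖B‖ := norm_mul_le _ _
      _ ≤ ‖y - x‖ := mul_le_of_le_one_right (norm_nonneg _) (PadicInt.norm_le_one _)
      _ = ‖x - y‖ := norm_sub_rev _ _
      _ ≤ _ := hbd n p
  have hvt : Filter.Tendsto v Filter.atTop (nhds u) := by
    rw [Units.isInducing_embedProduct.tendsto_nhds_iff]
    have : (Units.embedProduct M) ∘ v =
        fun n => ((v n : M), MulOpposite.op (↑(v n)⁻¹ : M)) := rfl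
    rw [this]
    simp only [Units.embedProduct_apply]
    exact h1.prodMk_nhds ((MulOpposite.continuous_op.tendsto _).comp h2)
  refine mem_closure_of_tendsto hvt (Filter.Eventually.of_forall fun n => ?_)
  exact Subgroup.subset_closure (hv n)
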